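/- For every x ∈ (0,1) and y ∈ (−1,1), the double generating function Q(x,y) = ∑_{j=0}^{∞} y^j · f_j(x) converges and equals B(x, 1−y, 1+y) / (x^{1−y} · (1−x)^{1+y}), where B(x,a,b) = ∫_0^x t^{a−1}(1−t)^{b−1} dt is the incomplete beta function. -/

import Mathlib

/-- The generalized harmonic numbers: `genH k n = H_n^{(k)}`, defined by `H_n^{(0)} = 1`
and `H_n^{(k)} = ∑_{j=1}^{n} H_j^{(k−1)}/j` for `k ≥ 1`. -/
noncomputable def genH : ℕ → ℕ → ℝ
  | 0, _ => 1
  | (k+1), n => ∑ j ∈ Finset.Icc 1 n, genH k j / (j : ℝ)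

namespace Stmt14Aux

lemma genH_nonneg : ∀ (k n : ℕ), 0 ≤ genH k n
  | 0, _ => zero_le_one
  | (k+1), _ => Finset.sum_nonneg fun j _ =>
      div_nonneg (genH_nonneg k j) (Nat.cast_nonneg j)

lemma genH_le_self (k : ℕ) : ∀ n : ℕ, 1 ≤ n → genH k n ≤ n := by
  induction k with
  | zero =>
    intro n hn
    show (1 : ℝ) ≤ n
    exact_mod_cast hn
  | succ k ih =>
    intro n hn
    have h1 : ∀ j ∈ Finset.Icc 1 n, genH k j / (j : ℝ) ≤ 1 := by
      intro j hj
      rw [Finset.mem_Icc] at hj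
      have hj0 : (0 : ℝ) < j := by exact_mod_cast hj.1
      rw [div_le_one hj0]
      exact ih j hj.1
    calc genH (k+1) n = ∑ j ∈ Finset.Icc 1 n, genH k j / (j : ℝ) := rfl
      _ ≤ ∑ _j ∈ Finset.Icc 1 n, (1 : ℝ) := Finset.sum_le_sum h1
      _ = n := by simp

lemma genH_le (k n : ℕ) : genH k n ≤ n + 1 := by
  cases n with
  | zero =>
    cases k with
    | zero => norm_num [genH]
    | succ k => simp [genH]
  | succ n =>
    have := genH_le_self k (n+1) (by omega)
    push_cast at this ⊢
    linarith

lemma genH_zero : ∀ k : ℕ, genH k 0 = if k = 0 then 1 else 0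
  | 0 => rfl
  | (k+1) => by simp [genH]

lemma genH_succ_right (k n : ℕ) : genH (k+1) (n+1) = genH (k+1) n + genH k (n+1) / ((n : ℝ)+1) := by
  show (∑ j ∈ Finset.Icc 1 (n+1), genH k j / (j : ℝ)) = _
  rw [Finset.sum_Icc_succ_top (by omega : 1 ≤ n + 1)]
  push_cast
  rfl

/-- `cc y n = ∏_{j=1}^n j/(j-y)` -/
noncomputable def cc (y : ℝ) (n : ℕ) : ℝ := ∏ j ∈ Finset.range n, ((j:ℝ)+1)/((j:ℝ)+1-y)

lemma cc_zero (y : ℝ) : cc y 0 = 1 := by simp [cc]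

lemma cc_one {y : ℝ} : cc y 1 = 1/(1-y) := by simp [cc]

lemma cc_succ (y : ℝ) (n : ℕ) : cc y (n+1) = cc y n * (((n:ℝ)+1)/((n:ℝ)+1-y)) := by
  rw [cc, Finset.prod_range_succ]; rfl

lemma cc_pos {y : ℝ} (hy2 : y < 1) (n : ℕ) : 0 < cc y n := by
  apply Finset.prod_pos
  intro j _
  have h1 : (0:ℝ) < (j:ℝ) + 1 := by positivity
  have h2 : (0:ℝ) < (j:ℝ) + 1 - y := by
    have : (0:ℝ) ≤ (j:ℝ) := Nat.cast_nonneg j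
    linarith
  positivity

lemma cc_le {y : ℝ} (hy1 : -1 < y) (hy2 : y < 1) (n : ℕ) :
    cc y n ≤ 2/(1-y) * ((n:ℝ)+1) := by
  have h1y : (0:ℝ) < 1 - y := by linarith
  have key : ∀ m : ℕ, cc y (m+1) ≤ ((m:ℝ)+1) * cc y 1 := by
    intro m
    induction m with
    | zero => simp
    | succ m ih =>
      rw [cc_succ]
      push_cast
      have hfac : ((m:ℝ)+1+1)/((m:ℝ)+1+1-y) ≤ ((m:ℝ)+1+1)/((m:ℝ)+1) := by
        apply div_le_div_of_nonneg_left (by positivity) (by positivity)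
        linarith
      calc cc y (m+1) * (((m:ℝ)+1+1)/((m:ℝ)+1+1-y))
          ≤ (((m:ℝ)+1) * cc y 1) * (((m:ℝ)+1+1)/((m:ℝ)+1)) := by
            have hmy : (0:ℝ) < (m:ℝ)+1+1-y := by
              have : (0:ℝ) ≤ (m:ℝ) := Nat.cast_nonneg m
              linarith
            have hc1 : 0 < cc y 1 := cc_pos hy2 1
            apply mul_le_mul ih hfac (le_of_lt (by positivity)) (le_of_lt (by positivity))
        _ = ((m:ℝ)+1+1) * cc y 1 := by
            field_simp
  cases n with
  | zero =>
    rw [cc_zero]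
    rw [div_mul_eq_mul_div, le_div_iff₀ h1y]
    push_cast
    nlinarith
  | succ n =>
    have := key n
    rw [cc_one] at this
    have h2 : ((n:ℝ)+1) * (1/(1-y)) ≤ 2/(1-y) * ((n:ℝ)+1+1) := by
      rw [div_mul_eq_mul_div, mul_one_div, div_le_div_iff₀ h1y h1y]
      nlinarith [Nat.cast_nonneg (α := ℝ) n]
    push_cast at this ⊢
    linarith

lemma summable_one {r : ℝ} (hr0 : 0 ≤ r) (hr1 : r < 1) :
    Summable (fun n : ℕ => ((n:ℝ)+1) * r^n) := by
  have h1 : Summable (fun n : ℕ => (n:ℝ)^1 * r^n) :=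
    summable_pow_mul_geometric_of_norm_lt_one 1
      (by rwa [Real.norm_eq_abs, abs_of_nonneg hr0])
  have h2 : Summable (fun n : ℕ => r^n) := summable_geometric_of_lt_one hr0 hr1
  exact (h1.add h2).congr fun n => by ring

lemma summable_two {r : ℝ} (hr0 : 0 ≤ r) (hr1 : r < 1) :
    Summable (fun n : ℕ => ((n:ℝ)+1) * ((n:ℝ)+2) * r^n) := by
  have hnorm : ‖r‖ < 1 := by rwa [Real.norm_eq_abs, abs_of_nonneg hr0]
  have h2 : Summable (fun n : ℕ => (n:ℝ)^2 * r^n) :=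
    summable_pow_mul_geometric_of_norm_lt_one 2 hnorm
  have h1 : Summable (fun n : ℕ => (n:ℝ)^1 * r^n) :=
    summable_pow_mul_geometric_of_norm_lt_one 1 hnorm
  have h0 : Summable (fun n : ℕ => r^n) := summable_geometric_of_lt_one hr0 hr1
  exact ((h2.add (h1.mul_left 3)).add (h0.mul_left 2)).congr fun n => by ring


section WithY

variable {y : ℝ} (hy1 : -1 < y) (hy2 : y < 1)

/-- The generating function `S(t) = ∑ cc y (n+1) t^n`. -/
noncomputable def Sf (y : ℝ) (t : ℝ) : ℝ := ∑' n : ℕ, cc y (n+1) * t^n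

/-- Term-by-term derivative of `Sf`. -/
noncomputable def Sd (y : ℝ) (t : ℝ) : ℝ := ∑' n : ℕ, cc y (n+1) * ((n:ℝ) * t^(n-1))

lemma e_le (hy1 : -1 < y) (hy2 : y < 1) (n : ℕ) :
    cc y (n+1) ≤ 4/(1-y) * ((n:ℝ)+1) := by
  have := cc_le hy1 hy2 (n+1)
  have h1y : (0:ℝ) < 1 - y := by linarith
  have hn : (0:ℝ) ≤ (n:ℝ) := Nat.cast_nonneg n
  push_cast at this
  calc cc y (n+1) ≤ 2/(1-y) * ((n:ℝ)+1+1) := this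
    _ ≤ 4/(1-y) * ((n:ℝ)+1) := by
        rw [div_mul_eq_mul_div, div_mul_eq_mul_div, div_le_div_iff₀ h1y h1y]
        nlinarith

lemma summable_e (hy1 : -1 < y) (hy2 : y < 1) {t : ℝ} (ht : |t| < 1) :
    Summable (fun n : ℕ => cc y (n+1) * t^n) := by
  apply Summable.of_norm_bounded (g := fun n : ℕ => 4/(1-y) * (((n:ℝ)+1) * |t|^n))
  · exact ((summable_one (abs_nonneg t) ht).mul_left _)
  · intro n
    have h1 : 0 < cc y (n+1) := cc_pos hy2 (n+1)
    rw [Real.norm_eq_abs, abs_mul, abs_pow, abs_of_pos h1, ← mul_assoc]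
    have := e_le hy1 hy2 n
    apply mul_le_mul_of_nonneg_right _ (pow_nonneg (abs_nonneg t) n)
    exact this

lemma summable_ne (hy1 : -1 < y) (hy2 : y < 1) {t : ℝ} (ht : |t| < 1) :
    Summable (fun n : ℕ => (n:ℝ) * cc y (n+1) * t^n) := by
  apply Summable.of_norm_bounded (g := fun n : ℕ => 4/(1-y) * (((n:ℝ)+1) * ((n:ℝ)+2) * |t|^n))
  · exact ((summable_two (abs_nonneg t) ht).mul_left _)
  · intro n
    have h1 : 0 < cc y (n+1) := cc_pos hy2 (n+1)
    have h1y : (0:ℝ) < 1 - y := by linarith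
    have hn : (0:ℝ) ≤ (n:ℝ) := Nat.cast_nonneg n
    have he := e_le hy1 hy2 n
    rw [Real.norm_eq_abs, abs_mul, abs_mul, abs_pow, abs_of_pos h1, abs_of_nonneg hn]
    have hpow : (0:ℝ) ≤ |t|^n := pow_nonneg (abs_nonneg t) n
    have : (n:ℝ) * cc y (n+1) ≤ 4/(1-y) * (((n:ℝ)+1) * ((n:ℝ)+2)) := by
      calc (n:ℝ) * cc y (n+1) ≤ ((n:ℝ)+2) * (4/(1-y) * ((n:ℝ)+1)) := by
            apply mul_le_mul (by linarith) he (le_of_lt h1) (by linarith)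
        _ = 4/(1-y) * (((n:ℝ)+1) * ((n:ℝ)+2)) := by ring
    calc (n:ℝ) * cc y (n+1) * |t|^n ≤ 4/(1-y) * (((n:ℝ)+1) * ((n:ℝ)+2)) * |t|^n :=
          mul_le_mul_of_nonneg_right this hpow
      _ = 4/(1-y) * (((n:ℝ)+1) * ((n:ℝ)+2) * |t|^n) := by ring

lemma hasDerivAt_Sf (hy1 : -1 < y) (hy2 : y < 1) {t : ℝ} (ht : |t| < 1) :
    HasDerivAt (Sf y) (Sd y t) t := by
  set r : ℝ := (|t| + 1) / 2 with hr
  have hr0 : 0 < r := by positivity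
  have hrt : |t| < r := by rw [hr]; linarith
  have hr1 : r < 1 := by rw [hr]; linarith
  have h1y : (0:ℝ) < 1 - y := by linarith
  have hg' : ∀ (n : ℕ), ∀ u ∈ Metric.ball (0:ℝ) r,
      ‖cc y (n+1) * ((n:ℝ) * u^(n-1))‖ ≤ (4/(1-y)/r) * (((n:ℝ)+1) * ((n:ℝ)+2) * r^n) := by
    intro n u hu
    rw [Metric.mem_ball, Real.dist_eq, sub_zero] at hu
    have h1 : 0 < cc y (n+1) := cc_pos hy2 (n+1)
    have he := e_le hy1 hy2 n
    rw [Real.norm_eq_abs, abs_mul, abs_mul, abs_of_pos h1, Nat.abs_cast, abs_pow]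
    cases n with
    | zero => simp; positivity
    | succ n =>
      have hupow : |u|^(n+1-1) ≤ r^n := by
        simpa using pow_le_pow_left₀ (abs_nonneg u) (le_of_lt hu) n
      have hn : (0:ℝ) ≤ (n:ℝ) := Nat.cast_nonneg n
      have he1 := e_le hy1 hy2 (n+1)
      have hrn : (0:ℝ) ≤ r^n := by positivity
      have h4 : (0:ℝ) ≤ 4/(1-y) := div_nonneg (by norm_num) (le_of_lt h1y)
      have h42 : (0:ℝ) ≤ 4/(1-y) * ((n:ℝ)+2) := mul_nonneg h4 (by linarith)
      have step1 : cc y (n+1+1) * (((n+1:ℕ):ℝ) * |u|^(n+1-1)) ≤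
          (4/(1-y) * ((n:ℝ)+2)) * (((n:ℝ)+1) * r^n) := by
        push_cast at he1 ⊢
        apply mul_le_mul (by linarith) _ (by positivity) (by linarith)
        exact mul_le_mul_of_nonneg_left (by simpa using hupow) (by linarith)
      have hrne : r ≠ 0 := ne_of_gt hr0
      have hX : (4/(1-y)/r) * ((((n+1:ℕ):ℝ)+1) * ((((n+1:ℕ):ℝ))+2) * r^(n+1))
          = (4/(1-y)) * (((n:ℝ)+2) * (((n:ℝ)+3) * r^n)) := by
        push_cast
        rw [pow_succ]
        field_simp
        ring
      have step2 : (4/(1-y) * ((n:ℝ)+2)) * (((n:ℝ)+1) * r^n)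
          ≤ (4/(1-y)/r) * ((((n+1:ℕ):ℝ)+1) * ((((n+1:ℕ):ℝ))+2) * r^(n+1)) := by
        rw [hX]
        have hmain : (4/(1-y)) * (((n:ℝ)+2) * (((n:ℝ)+1) * r^n))
            ≤ (4/(1-y)) * (((n:ℝ)+2) * (((n:ℝ)+3) * r^n)) := by
          apply mul_le_mul_of_nonneg_left _ h4
          apply mul_le_mul_of_nonneg_left _ (by linarith)
          exact mul_le_mul_of_nonneg_right (by linarith) hrn
        calc (4/(1-y) * ((n:ℝ)+2)) * (((n:ℝ)+1) * r^n)
            = (4/(1-y)) * (((n:ℝ)+2) * (((n:ℝ)+1) * r^n)) := by ring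
          _ ≤ _ := hmain
      exact le_trans step1 step2
  exact hasDerivAt_tsum_of_isPreconnected
    (((summable_two (le_of_lt hr0) hr1).mul_left (4/(1-y)/r)))
    Metric.isOpen_ball ((convex_ball (0:ℝ) r).isPreconnected)
    (fun n u _ => (hasDerivAt_pow n u).const_mul (cc y (n+1)))
    hg' (Metric.mem_ball_self hr0)
    (summable_e hy1 hy2 (by norm_num : |(0:ℝ)| < 1))
    (by rw [Metric.mem_ball, Real.dist_eq, sub_zero]; exact hrt)

lemma t_mul_Sd (hy1 : -1 < y) (hy2 : y < 1) {t : ℝ} (ht : |t| < 1) :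
    t * Sd y t = ∑' n : ℕ, (n:ℝ) * cc y (n+1) * t^n := by
  rw [Sd, ← tsum_mul_left]
  apply tsum_congr
  intro n
  cases n with
  | zero => simp
  | succ n =>
    simp only [Nat.add_sub_cancel]
    push_cast
    ring

lemma key_identity (hy1 : -1 < y) (hy2 : y < 1) {t : ℝ} (ht : |t| < 1) :
    (1-y) * Sf y t + t * Sd y t = 1 + 2*t*Sf y t + t^2 * Sd y t := by
  have hse := summable_e hy1 hy2 ht
  have hsne := summable_ne hy1 hy2 ht
  have h1y : (0:ℝ) < 1 - y := by linarith
  -- LHS as a single tsum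
  have hL : (1-y) * Sf y t + t * Sd y t = ∑' n : ℕ, ((1-y) + (n:ℝ)) * cc y (n+1) * t^n := by
    rw [Sf, ← tsum_mul_left, t_mul_Sd hy1 hy2 ht, ← Summable.tsum_add (hse.mul_left (1-y)) hsne]
    exact tsum_congr fun n => by ring
  rw [hL]
  have hsA : Summable (fun n : ℕ => ((1-y) + (n:ℝ)) * cc y (n+1) * t^n) :=
    ((hse.mul_left (1-y)).add hsne).congr fun n => by ring
  rw [Summable.tsum_eq_zero_add hsA]
  have h0 : ((1-y) + ((0:ℕ):ℝ)) * cc y (0+1) * t^0 = 1 := by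
    rw [cc_one]
    push_cast
    field_simp
    ring
  rw [h0]
  -- use the recurrence on the shifted terms
  have hrec : ∀ n : ℕ, ((1-y) + ((n+1:ℕ):ℝ)) * cc y (n+1+1) * t^(n+1)
      = 2 * (cc y (n+1) * t^n) * t + ((n:ℝ) * cc y (n+1) * t^n) * t := by
    intro n
    have hne : ((n:ℝ)+1+1) - y ≠ 0 := by
      have : (0:ℝ) ≤ (n:ℝ) := Nat.cast_nonneg n
      intro h; nlinarith
    rw [cc_succ y (n+1)]
    push_cast
    rw [pow_succ]
    field_simp
    ring
  have : (∑' n : ℕ, ((1-y) + ((n+1:ℕ):ℝ)) * cc y (n+1+1) * t^(n+1))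
      = 2*t*Sf y t + t^2 * Sd y t := by
    calc (∑' n : ℕ, ((1-y) + ((n+1:ℕ):ℝ)) * cc y (n+1+1) * t^(n+1))
        = ∑' n : ℕ, (2 * (cc y (n+1) * t^n) * t + ((n:ℝ) * cc y (n+1) * t^n) * t) :=
          tsum_congr hrec
      _ = (∑' n : ℕ, 2 * (cc y (n+1) * t^n) * t) + ∑' n : ℕ, ((n:ℝ) * cc y (n+1) * t^n) * t := by
          apply Summable.tsum_add ((hse.mul_left 2).mul_right t) (hsne.mul_right t)
      _ = 2*t*Sf y t + t^2 * Sd y t := by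
          rw [tsum_mul_right, tsum_mul_right]
          have ha : (∑' n : ℕ, 2 * (cc y (n+1) * t^n)) = 2 * Sf y t := by
            rw [Sf]; exact tsum_mul_left
          have hb : (∑' n : ℕ, (n:ℝ) * cc y (n+1) * t^n) = t * Sd y t :=
            (t_mul_Sd hy1 hy2 ht).symm
          rw [ha, hb]; ring
  rw [this]; ring

end WithY

section Main

variable {x y : ℝ}

lemma hasDerivAt_g (hy1 : -1 < y) (hy2 : y < 1) {t : ℝ} (ht0 : 0 < t) (ht1 : t < 1) :
    HasDerivAt (fun u : ℝ => u ^ (1-y) * (1-u) ^ (1+y) * Sf y u)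
      (t ^ (-y) * (1-t) ^ y) t := by
  have ht : |t| < 1 := by rw [abs_of_pos ht0]; exact ht1
  have h1t : 0 < 1 - t := by linarith
  have h1 : HasDerivAt (fun u : ℝ => u ^ (1-y)) ((1-y) * t^(-y)) t := by
    have := Real.hasDerivAt_rpow_const (x := t) (p := 1-y) (Or.inl (ne_of_gt ht0))
    rwa [show (1:ℝ)-y-1 = -y by ring] at this
  have h2 : HasDerivAt (fun u : ℝ => (1-u) ^ (1+y)) (-1 * (1+y) * (1-t)^y) t := by
    have hb : HasDerivAt (fun u : ℝ => 1 - u) (-1) t := (hasDerivAt_id t).const_sub 1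
    have := hb.rpow_const (p := 1+y) (Or.inl (ne_of_gt h1t))
    rwa [show (1:ℝ)+y-1 = y by ring] at this
  have hS : HasDerivAt (Sf y) (Sd y t) t := hasDerivAt_Sf hy1 hy2 ht
  have total := (h1.mul h2).mul hS
  have key := key_identity hy1 hy2 ht
  have bracket : ((1-y)*(1-t) - t*(1+y)) * Sf y t + t*(1-t) * Sd y t = 1 := by
    linear_combination key
  have e1 : t ^ (1-y) = t^(-y) * t := by
    rw [show (1:ℝ)-y = -y+1 by ring, Real.rpow_add ht0, Real.rpow_one]
  have e2 : (1-t) ^ (1+y) = (1-t)^y * (1-t) := by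
    rw [show (1:ℝ)+y = y+1 by ring, Real.rpow_add h1t, Real.rpow_one]
  refine total.congr_deriv (Eq.symm ?_)
  rw [Pi.mul_apply, e1, e2]
  linear_combination -(t^(-y) * (1-t)^y) * bracket

lemma integral_eq (hy1 : -1 < y) (hy2 : y < 1) (hx0 : 0 < x) (hx1 : x < 1) :
    (∫ t in (0:ℝ)..x, t ^ (-y) * (1-t) ^ y)
      = x ^ (1-y) * (1-x) ^ (1+y) * Sf y x := by
  have h1y : (0:ℝ) < 1 - y := by linarith
  set g : ℝ → ℝ := fun u => u ^ (1-y) * (1-u) ^ (1+y) * Sf y u with hg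
  have hcont : ContinuousOn g (Set.Icc 0 x) := by
    intro t htmem
    obtain ⟨ht0, htx⟩ := htmem
    have h1t : 0 < 1 - t := by linarith
    have habs : |t| < 1 := by rw [abs_of_nonneg ht0]; linarith
    have c1 : ContinuousAt (fun u : ℝ => u ^ (1-y)) t :=
      Real.continuousAt_rpow_const t (1-y) (Or.inr (by linarith))
    have c2 : ContinuousAt (fun u : ℝ => (1-u) ^ (1+y)) t := by
      apply ContinuousAt.rpow_const
      · exact continuousAt_const.sub continuousAt_id
      · exact Or.inl (ne_of_gt h1t)
    have c3 : ContinuousAt (Sf y) t := (hasDerivAt_Sf hy1 hy2 habs).continuousAt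
    exact ((c1.mul c2).mul c3).continuousWithinAt
  have hderiv : ∀ t ∈ Set.Ioo (0:ℝ) x, HasDerivWithinAt g (t ^ (-y) * (1-t) ^ y) (Set.Ioi t) t :=
    fun t htmem => (hasDerivAt_g hy1 hy2 htmem.1 (lt_trans htmem.2 hx1)).hasDerivWithinAt
  have hint : IntervalIntegrable (fun t : ℝ => t ^ (-y) * (1-t) ^ y) MeasureTheory.volume 0 x := by
    apply IntervalIntegrable.mul_continuousOn
    · exact intervalIntegral.intervalIntegrable_rpow' (by linarith)
    · intro t htmem
      rw [Set.uIcc_of_le (le_of_lt hx0)] at htmem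
      have h1t : 0 < 1 - t := by linarith [htmem.2]
      apply ContinuousAt.continuousWithinAt
      apply ContinuousAt.rpow_const
      · exact continuousAt_const.sub continuousAt_id
      · exact Or.inl (ne_of_gt h1t)
  have := intervalIntegral.integral_eq_sub_of_hasDeriv_right_of_le (le_of_lt hx0)
    hcont hderiv hint
  rw [this, hg]
  simp only
  rw [Real.zero_rpow (by linarith : (1:ℝ)-y ≠ 0)]
  ring

end Main

section Pside

variable {x y : ℝ}

lemma summable_P (hy1 : -1 < y) (hy2 : y < 1) (n : ℕ) :
    Summable (fun k : ℕ => y^k * genH k n) := by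
  have hy : |y| < 1 := abs_lt.2 ⟨hy1, hy2⟩
  apply Summable.of_norm_bounded (g := fun k : ℕ => ((n:ℝ)+1) * |y|^k)
  · exact (summable_geometric_of_lt_one (abs_nonneg y) hy).mul_left _
  · intro k
    rw [Real.norm_eq_abs, abs_mul, abs_pow, abs_of_nonneg (genH_nonneg k n)]
    calc |y|^k * genH k n ≤ |y|^k * ((n:ℝ)+1) :=
        mul_le_mul_of_nonneg_left (genH_le k n) (pow_nonneg (abs_nonneg y) k)
      _ = ((n:ℝ)+1) * |y|^k := by ring

lemma P_eq_cc (hy1 : -1 < y) (hy2 : y < 1) : ∀ n : ℕ, (∑' k : ℕ, y^k * genH k n) = cc y n := by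
  intro n
  induction n with
  | zero =>
    rw [cc_zero]
    have h : (fun k : ℕ => y^k * genH k 0) = fun k : ℕ => if k = 0 then 1 else 0 := by
      funext k
      rw [genH_zero]
      cases k <;> simp
    rw [h, tsum_ite_eq]
  | succ n ih =>
    have hs1 := summable_P hy1 hy2 (n+1)
    have hs0 := summable_P hy1 hy2 n
    set P1 := ∑' k : ℕ, y^k * genH k (n+1) with hP1def
    set P0 := ∑' k : ℕ, y^k * genH k n with hP0def
    have hsub : Summable (fun k : ℕ => y^k * genH k (n+1) - y^k * genH k n) := hs1.sub hs0
    have hdiff : P1 - P0 = ∑' k : ℕ, (y^k * genH k (n+1) - y^k * genH k n) :=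
      (Summable.tsum_sub hs1 hs0).symm
    have hshift : (∑' k : ℕ, (y^k * genH k (n+1) - y^k * genH k n))
        = y/((n:ℝ)+1) * P1 := by
      rw [Summable.tsum_eq_zero_add hsub]
      have h0 : y^0 * genH 0 (n+1) - y^0 * genH 0 n = 0 := by simp [genH]
      rw [h0, zero_add]
      have hterm : ∀ k : ℕ, y^(k+1) * genH (k+1) (n+1) - y^(k+1) * genH (k+1) n
          = y/((n:ℝ)+1) * (y^k * genH k (n+1)) := by
        intro k
        rw [genH_succ_right k n, pow_succ]
        have hne : ((n:ℝ)+1) ≠ 0 := by positivity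
        field_simp
        ring
      rw [tsum_congr hterm, tsum_mul_left]
    have heq : P1 - P0 = y/((n:ℝ)+1) * P1 := by rw [hdiff, hshift]
    have hne : ((n:ℝ)+1) - y ≠ 0 := by
      have : (0:ℝ) ≤ (n:ℝ) := Nat.cast_nonneg n
      intro h; nlinarith
    have hne1 : ((n:ℝ)+1) ≠ 0 := by positivity
    have heq' : (((n:ℝ)+1) - y) * P1 = ((n:ℝ)+1) * P0 := by
      field_simp at heq
      linear_combination heq
    rw [cc_succ, ← ih]
    rw [eq_comm, mul_comm, div_mul_eq_mul_div, div_eq_iff hne]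
    linear_combination -heq'

lemma summable_double (hy1 : -1 < y) (hy2 : y < 1) (hx0 : 0 < x) (hx1 : x < 1) :
    Summable (fun p : ℕ × ℕ => y^p.1 * (x^p.2 * genH p.1 (p.2+1))) := by
  have hy : |y| < 1 := abs_lt.2 ⟨hy1, hy2⟩
  have hprod : Summable (fun p : ℕ × ℕ => |y|^p.1 * (((p.2:ℝ)+1) * x^p.2)) :=
    Summable.mul_of_nonneg (f := fun k : ℕ => |y|^k) (g := fun i : ℕ => ((i:ℝ)+1) * x^i)
      (summable_geometric_of_lt_one (abs_nonneg y) hy)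
      (summable_one (le_of_lt hx0) hx1) (fun k => pow_nonneg (abs_nonneg y) k)
      (fun i => mul_nonneg (by positivity) (pow_nonneg (le_of_lt hx0) i))
  apply Summable.of_norm_bounded (g := fun p : ℕ × ℕ => |y|^p.1 * (((p.2:ℝ)+1) * x^p.2)) hprod
  · rintro ⟨j, i⟩
    simp only
    rw [Real.norm_eq_abs, abs_mul, abs_mul, abs_pow, abs_pow, abs_of_pos hx0,
      abs_of_nonneg (genH_nonneg j (i+1))]
    have hle : genH j (i+1) ≤ (i:ℝ)+1 := by
      have := genH_le_self j (i+1) (by omega)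
      push_cast at this
      linarith
    calc |y|^j * (x^i * genH j (i+1)) ≤ |y|^j * (x^i * ((i:ℝ)+1)) := by
          apply mul_le_mul_of_nonneg_left _ (pow_nonneg (abs_nonneg y) j)
          exact mul_le_mul_of_nonneg_left hle (pow_nonneg (le_of_lt hx0) i)
      _ = |y|^j * (((i:ℝ)+1) * x^i) := by ring

end Pside

end Stmt14Aux

/-- For every `x ∈ (0,1)` and `y ∈ (−1,1)`, the double generating function
`Q(x,y) = ∑_{j=0}^{∞} y^j f_j(x)` (where `f_j(x) = ∑_{i=0}^{∞} x^i H_{i+1}^{(j)}`)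
converges and equals `B(x, 1−y, 1+y)/(x^{1−y} (1−x)^{1+y})`, where
`B(x,a,b) = ∫_0^x t^{a−1}(1−t)^{b−1} dt` is the incomplete beta function. -/
theorem stmt14 (x y : ℝ) (hx : x ∈ Set.Ioo (0 : ℝ) 1) (hy : y ∈ Set.Ioo (-1 : ℝ) 1) :
    Summable (fun j : ℕ => y ^ j * ∑' i : ℕ, x ^ i * genH j (i + 1)) ∧
    (∑' j : ℕ, y ^ j * ∑' i : ℕ, x ^ i * genH j (i + 1))
      = (∫ t in (0 : ℝ)..x, t ^ (1 - y - 1) * (1 - t) ^ (1 + y - 1))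
        / (x ^ (1 - y) * (1 - x) ^ (1 + y)) := by
  obtain ⟨hx0, hx1⟩ := hx
  obtain ⟨hy1, hy2⟩ := hy
  have hdouble := Stmt14Aux.summable_double hy1 hy2 hx0 hx1
  constructor
  · have hp : Summable (fun j : ℕ => ∑' i : ℕ, y ^ j * (x ^ i * genH j (i+1))) :=
      hdouble.prod
    apply hp.congr
    intro j
    exact tsum_mul_left
  · have hxabs : |x| < 1 := by rw [abs_of_pos hx0]; exact hx1
    have hQ : (∑' j : ℕ, y ^ j * ∑' i : ℕ, x ^ i * genH j (i + 1)) = Stmt14Aux.Sf y x := by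
      calc (∑' j : ℕ, y ^ j * ∑' i : ℕ, x ^ i * genH j (i + 1))
          = ∑' j : ℕ, ∑' i : ℕ, y ^ j * (x ^ i * genH j (i + 1)) :=
            tsum_congr fun j => tsum_mul_left.symm
        _ = ∑' i : ℕ, ∑' j : ℕ, y ^ j * (x ^ i * genH j (i + 1)) := by
            refine (Summable.tsum_comm (f := fun (j i : ℕ) => y ^ j * (x ^ i * genH j (i + 1))) ?_).symm
            exact hdouble
        _ = ∑' i : ℕ, x ^ i * ∑' j : ℕ, y ^ j * genH j (i + 1) := by
            refine tsum_congr fun i => ?_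
            rw [← tsum_mul_left]
            exact tsum_congr fun j => by ring
        _ = ∑' i : ℕ, Stmt14Aux.cc y (i+1) * x ^ i := by
            refine tsum_congr fun i => ?_
            rw [Stmt14Aux.P_eq_cc hy1 hy2 (i+1)]
            ring
        _ = Stmt14Aux.Sf y x := rfl
    rw [hQ]
    simp only [show (1:ℝ) - y - 1 = -y by ring, show (1:ℝ) + y - 1 = y by ring]
    rw [Stmt14Aux.integral_eq hy1 hy2 hx0 hx1]
    rw [mul_div_cancel_left₀]
    have h1 : (0:ℝ) < x ^ (1-y) := Real.rpow_pos_of_pos hx0 _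
    have h2 : (0:ℝ) < (1-x) ^ (1+y) := Real.rpow_pos_of_pos (by linarith) _
    positivity
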